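/- There exist constants c, C > 0 such that for all s > 0: c·s·e^{−s} ≤ (s·coth s − 1)/sinh s ≤ C·s·e^{−s}. -/

import Mathlib

open Real Finset

lemma exp_neg_lb6 {s : ℝ} (h0 : 0 ≤ s) (h1 : s ≤ 1) :
    1 - s + s^2/2 - s^3/6 + s^4/24 - s^5/120 - 7*s^6/4320 ≤ Real.exp (-s) := by
  have habs : |(-s)| ≤ 1 := by rw [abs_neg, abs_of_nonneg h0]; exact h1
  have hb := Real.exp_bound habs (n := 6) (by norm_num)
  have hsum : ∑ m ∈ range 6, (-s) ^ m / m.factorial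
      = 1 - s + s^2/2 - s^3/6 + s^4/24 - s^5/120 := by
    simp [Finset.sum_range_succ, Nat.factorial]
    ring
  rw [hsum, abs_neg, abs_of_nonneg h0] at hb
  have := (abs_sub_le_iff.mp hb).2
  norm_num [Nat.factorial] at this
  nlinarith [this]

lemma exp_neg_lb4 {u : ℝ} (h0 : 0 ≤ u) (h1 : u ≤ 1) :
    1 - u + u^2/2 - u^3/6 - 5*u^4/96 ≤ Real.exp (-u) := by
  have habs : |(-u)| ≤ 1 := by rw [abs_neg, abs_of_nonneg h0]; exact h1
  have hb := Real.exp_bound habs (n := 4) (by norm_num)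
  have hsum : ∑ m ∈ range 4, (-u) ^ m / m.factorial
      = 1 - u + u^2/2 - u^3/6 := by
    simp [Finset.sum_range_succ, Nat.factorial]
    ring
  rw [hsum, abs_neg, abs_of_nonneg h0] at hb
  have := (abs_sub_le_iff.mp hb).2
  norm_num [Nat.factorial] at this
  nlinarith [this]

lemma pade {s : ℝ} (h0 : 0 ≤ s) (h2 : s ≤ 2) : 2 - s ≤ Real.exp (-s) * (2 + s) := by
  rcases le_or_gt s 1 with h1 | h1
  · have := exp_neg_lb6 h0 h1
    nlinarith [pow_nonneg h0 3, pow_nonneg h0 4, pow_nonneg h0 5, pow_nonneg h0 6,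
      mul_nonneg (pow_nonneg h0 3) (sub_nonneg.mpr h1),
      mul_nonneg (pow_nonneg h0 4) (sub_nonneg.mpr h1),
      mul_nonneg (pow_nonneg h0 5) (sub_nonneg.mpr h1),
      mul_nonneg (pow_nonneg h0 6) (sub_nonneg.mpr h1)]
  · obtain ⟨u, rfl⟩ : ∃ u, s = u + 1 := ⟨s - 1, by ring⟩
    have hu0 : 0 ≤ u := by linarith
    have hu1 : u ≤ 1 := by linarith
    have hT := exp_neg_lb4 hu0 hu1
    have hcube : 0 ≤ u^2*(1-u) := mul_nonneg (sq_nonneg u) (by linarith)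
    have hquart : 0 ≤ u^3*(1-u) := mul_nonneg (pow_nonneg hu0 3) (by linarith)
    have hT0 : (0:ℝ) ≤ 1 - u + u^2/2 - u^3/6 - 5*u^4/96 := by
      nlinarith [hcube, hquart, hu0, hu1, sq_nonneg u]
    have hinv : Real.exp 1 * (Real.exp 1)⁻¹ = 1 := mul_inv_cancel₀ (ne_of_gt (Real.exp_pos 1))
    have he1 : (0.36787944 : ℝ) ≤ Real.exp (-1) := by
      rw [Real.exp_neg]
      nlinarith [Real.exp_one_lt_d9, Real.exp_pos 1, hinv, inv_pos.mpr (Real.exp_pos 1)]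
    have hsplit : Real.exp (-(u+1)) = Real.exp (-1) * Real.exp (-u) := by
      rw [← Real.exp_add]; ring_nf
    have hmul : (0.36787944 : ℝ) * (1 - u + u^2/2 - u^3/6 - 5*u^4/96)
        ≤ Real.exp (-1) * Real.exp (-u) :=
      mul_le_mul he1 hT hT0 (Real.exp_pos _).le
    have hmul2 := mul_le_mul_of_nonneg_right hmul (by linarith : (0:ℝ) ≤ 3 + u)
    rw [hsplit]
    nlinarith [hmul2, hu0, hu1, hcube, hquart, sq_nonneg u,
      mul_nonneg (pow_nonneg hu0 4) (by linarith : (0:ℝ) ≤ 1 - u)]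

set_option maxHeartbeats 1000000 in
theorem coth_estimate :
    ∃ c C : ℝ, 0 < c ∧ 0 < C ∧ ∀ s : ℝ, 0 < s →
      c * s * Real.exp (-s) ≤ (s * (Real.cosh s / Real.sinh s) - 1) / Real.sinh s ∧
      (s * (Real.cosh s / Real.sinh s) - 1) / Real.sinh s ≤ C * s * Real.exp (-s) := by
  refine ⟨1/4, 2, by norm_num, by norm_num, fun s hs => ?_⟩
  have hy0 : 0 < Real.exp (-s) := Real.exp_pos _
  have hE1 : 1 < Real.exp s := by
    have := Real.exp_lt_exp.mpr hs; simpa using this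
  have hy1 : Real.exp (-s) < 1 := by
    have := Real.exp_lt_exp.mpr (neg_lt_zero.mpr hs); simpa using this
  have hEy : Real.exp s * Real.exp (-s) = 1 := by rw [← Real.exp_add]; simp
  have hEmy : 0 < Real.exp s - Real.exp (-s) := by linarith
  have hEinv : Real.exp s = (Real.exp (-s))⁻¹ := by rw [Real.exp_neg, inv_inv]
  have hrw : (s * (Real.cosh s / Real.sinh s) - 1) / Real.sinh s
      = 2*(s*(Real.exp s + Real.exp (-s)) - (Real.exp s - Real.exp (-s)))
        / (Real.exp s - Real.exp (-s))^2 := by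
    rw [Real.cosh_eq, Real.sinh_eq]
    field_simp
  -- facts about x = exp(-s)^2
  have hx2s : Real.exp (-s) ^ 2 = Real.exp (-(2*s)) := by
    rw [sq, ← Real.exp_add]; ring_nf
  have h0x : Real.exp (-s)^2 < 1 := by nlinarith [hy0, hy1]
  have h1 : 1 - Real.exp (-s)^2 ≤ 2*s := by
    have := Real.one_sub_le_exp_neg (2*s)
    rw [hx2s]; linarith
  have hpoly : 1 + 2*s + 2*s^2 ≤ Real.exp (2*s) := by
    have h := Real.sum_le_exp_of_nonneg (by positivity : (0:ℝ) ≤ 2*s) 3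
    have heval : ∑ i ∈ range 3, (2*s)^i / i.factorial = 1 + 2*s + 2*s^2 := by
      simp [Finset.sum_range_succ, Nat.factorial]; ring
    rw [heval] at h; exact h
  have hprod : Real.exp (-(2*s)) * Real.exp (2*s) = 1 := by rw [← Real.exp_add]; simp
  have h2 : Real.exp (-s)^2 * (1 + 2*s + 2*s^2) ≤ 1 := by
    calc Real.exp (-s)^2 * (1 + 2*s + 2*s^2)
        ≤ Real.exp (-s)^2 * Real.exp (2*s) :=
          mul_le_mul_of_nonneg_left hpoly (sq_nonneg _)
      _ = 1 := by rw [hx2s, hprod]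
  have hup : 0 ≤ s*(Real.exp (-s)^2)^2 - 3*s*Real.exp (-s)^2 + 1 - Real.exp (-s)^2 := by
    nlinarith [h2, mul_nonneg (mul_nonneg hs.le (sq_nonneg (Real.exp (-s))))
      (by linarith : (0:ℝ) ≤ Real.exp (-s)^2 - 1 + 2*s)]
  have hlow : 0 ≤ 8*(s*(1 + Real.exp (-s)^2) - (1 - Real.exp (-s)^2))
      - s*(1 - Real.exp (-s)^2)^2 := by
    rcases le_or_gt s 2 with hs2 | hs2
    · have hp := pade hs.le hs2
      have hsq : (2-s)^2 ≤ (Real.exp (-s)*(2+s))^2 := by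
        nlinarith [hp, mul_pos hy0 (by linarith : (0:ℝ) < 2+s)]
      have hkey : s*(1 - Real.exp (-s)^2)*(1 - Real.exp (-s)^2)
          ≤ s*(1 - Real.exp (-s)^2)*(2*s) :=
        mul_le_mul_of_nonneg_left h1 (mul_nonneg hs.le (by linarith))
      nlinarith [hsq, hkey]
    · nlinarith [sq_nonneg (Real.exp (-s)), h0x, hs2,
        mul_pos hs (mul_pos hy0 hy0)]
  constructor
  · rw [hrw, le_div_iff₀ (by positivity)]
    have hid : (2*(s*(Real.exp s + Real.exp (-s)) - (Real.exp s - Real.exp (-s)))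
        - 1/4*s*Real.exp (-s)*(Real.exp s - Real.exp (-s))^2) * Real.exp (-s)
        = (8*(s*(1 + Real.exp (-s)^2) - (1 - Real.exp (-s)^2))
          - s*(1 - Real.exp (-s)^2)^2)/4 := by
      rw [hEinv]; field_simp; ring
    have h3 : 0 ≤ (2*(s*(Real.exp s + Real.exp (-s)) - (Real.exp s - Real.exp (-s)))
        - 1/4*s*Real.exp (-s)*(Real.exp s - Real.exp (-s))^2) * Real.exp (-s) := by
      rw [hid]; linarith
    have h4 := (mul_nonneg_iff_of_pos_right hy0).mp h3
    linarith
  · rw [hrw, div_le_iff₀ (by positivity)]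
    have hid2 : (2*s*Real.exp (-s)*(Real.exp s - Real.exp (-s))^2
        - 2*(s*(Real.exp s + Real.exp (-s)) - (Real.exp s - Real.exp (-s)))) * Real.exp (-s)
        = 2*(s*(Real.exp (-s)^2)^2 - 3*s*Real.exp (-s)^2 + 1 - Real.exp (-s)^2) := by
      rw [hEinv]; field_simp; ring
    have h3 : 0 ≤ (2*s*Real.exp (-s)*(Real.exp s - Real.exp (-s))^2
        - 2*(s*(Real.exp s + Real.exp (-s)) - (Real.exp s - Real.exp (-s)))) * Real.exp (-s) := by
      rw [hid2]; linarith
    have h4 := (mul_nonneg_iff_of_pos_right hy0).mp h3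
    linarith
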